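/- Let {p_n} be a strictly increasing enumeration of the primes and P = ⟨(p_n − 1)/p_n : n ∈ ℕ⟩. Then P is atomic with A(P) = {(p_n − 1)/p_n : n ∈ ℕ}, 0 is not a limit point of P, and ρ_k(P) < ∞ for every k ∈ ℕ. -/
import Mathlib


/-- A Puiseux monoid: an additive submonoid of ℚ consisting of nonnegative rationals. -/
def PM.Puiseux (P : AddSubmonoid ℚ) : Prop := ∀ x ∈ P, 0 ≤ x

/-- `a` is an atom of `P`. -/
def PM.IsAtom (P : AddSubmonoid ℚ) (a : ℚ) : Prop :=
  a ∈ P ∧ a ≠ 0 ∧ ∀ x ∈ P, ∀ y ∈ P, a = x + y → x = 0 ∨ y = 0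

/-- A factorization of `x` is a multiset of atoms of `P` summing to `x`. -/
def PM.IsFactorization (P : AddSubmonoid ℚ) (x : ℚ) (z : Multiset ℚ) : Prop :=
  (∀ a ∈ z, PM.IsAtom P a) ∧ z.sum = x

/-- The set of lengths of `x`. -/
def PM.Lengths (P : AddSubmonoid ℚ) (x : ℚ) : Set ℕ :=
  {n | ∃ z : Multiset ℚ, PM.IsFactorization P x z ∧ Multiset.card z = n}

/-- `P` is atomic: it is generated by its set of atoms. -/
def PM.Atomic (P : AddSubmonoid ℚ) : Prop :=
  AddSubmonoid.closure {a | PM.IsAtom P a} = P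

/-- The union of sets of lengths `U_k(P)`. -/
def PM.U (P : AddSubmonoid ℚ) (k : ℕ) : Set ℕ :=
  {l | ∃ x ∈ P, k ∈ PM.Lengths P x ∧ l ∈ PM.Lengths P x}

def PMaux.Aset : Set ℚ := {q | ∃ p : ℕ, p.Prime ∧ q = ((p : ℚ) - 1) / p}

lemma PMaux.bounds {q : ℚ} (hq : q ∈ PMaux.Aset) : 1/2 ≤ q ∧ q < 1 := by
  obtain ⟨p, hp, rfl⟩ := hq
  have h2 : (2:ℚ) ≤ p := by exact_mod_cast hp.two_le
  have hp0 : (0:ℚ) < p := by linarith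
  constructor
  · rw [div_le_div_iff₀ (by norm_num) hp0] at *
    linarith
  · rw [div_lt_one hp0]; linarith

lemma PMaux.mem_closure {x : ℚ} (hx : x ∈ AddSubmonoid.closure PMaux.Aset) :
    ∃ l : Multiset ℚ, (∀ y ∈ l, y ∈ PMaux.Aset) ∧ l.sum = x :=
  AddSubmonoid.exists_multiset_of_mem_closure hx

lemma PMaux.sum_bounds {l : Multiset ℚ} (hl : ∀ y ∈ l, y ∈ PMaux.Aset) :
    (Multiset.card l : ℚ) * (1/2) ≤ l.sum ∧ l.sum ≤ (Multiset.card l : ℚ) := by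
  constructor
  · have := Multiset.card_nsmul_le_sum (fun y hy => (PMaux.bounds (hl y hy)).1)
    simpa [nsmul_eq_mul] using this
  · have := Multiset.sum_le_card_nsmul l 1 (fun y hy => le_of_lt (PMaux.bounds (hl y hy)).2)
    simpa [nsmul_eq_mul] using this

/-- Every nonzero element of the closure is at least 1/2. -/
lemma PMaux.half_le {x : ℚ} (hx : x ∈ AddSubmonoid.closure PMaux.Aset) (hx0 : x ≠ 0) :
    1/2 ≤ x := by
  obtain ⟨l, hl, rfl⟩ := PMaux.mem_closure hx
  have hlb := (PMaux.sum_bounds hl).1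
  rcases Nat.eq_zero_or_pos (Multiset.card l) with h | h
  · simp [Multiset.card_eq_zero.mp h] at hx0
  · have : (1:ℚ) ≤ (Multiset.card l : ℚ) := by exact_mod_cast h
    nlinarith

/-- Elements of Aset are atoms. -/
lemma PMaux.isAtom_of_mem {a : ℚ} (ha : a ∈ PMaux.Aset) :
    PM.IsAtom (AddSubmonoid.closure PMaux.Aset) a := by
  obtain ⟨h1, h2⟩ := PMaux.bounds ha
  refine ⟨AddSubmonoid.subset_closure ha, by intro h; rw [h] at h1; norm_num at h1, ?_⟩
  intro x hx y hy hxy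
  by_contra hc
  push_neg at hc
  have hxb := PMaux.half_le hx hc.1
  have hyb := PMaux.half_le hy hc.2
  linarith

/-- Atoms are in Aset. -/
lemma PMaux.mem_of_isAtom {a : ℚ} (ha : PM.IsAtom (AddSubmonoid.closure PMaux.Aset) a) :
    a ∈ PMaux.Aset := by
  obtain ⟨haP, ha0, hsplit⟩ := ha
  obtain ⟨l, hl, rfl⟩ := PMaux.mem_closure haP
  rcases l.empty_or_exists_mem with h0 | ⟨b, hb⟩
  · simp [h0] at ha0
  obtain ⟨t, rfl⟩ := Multiset.exists_cons_of_mem hb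
  rcases t.empty_or_exists_mem with h0 | ⟨c, hc⟩
  · simpa [h0] using hl b (Multiset.mem_cons_self b t)
  · exfalso
    have hbA := hl b (Multiset.mem_cons_self b t)
    have htA : ∀ y ∈ t, y ∈ PMaux.Aset := fun y hy => hl y (Multiset.mem_cons_of_mem hy)
    have htP : t.sum ∈ AddSubmonoid.closure PMaux.Aset :=
      AddSubmonoid.multiset_sum_mem _ _ (fun y hy => AddSubmonoid.subset_closure (htA y hy))
    have hbP : b ∈ AddSubmonoid.closure PMaux.Aset := AddSubmonoid.subset_closure hbA
    have := hsplit b hbP t.sum htP (by simp)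
    have hb0 : b ≠ 0 := by
      have := (PMaux.bounds hbA).1; intro h; rw [h] at this; norm_num at this
    have ht0 : t.sum ≠ 0 := by
      have h1 := (PMaux.sum_bounds htA).1
      have hcard : 1 ≤ Multiset.card t := Multiset.card_pos.mpr (by
        intro h; rw [h] at hc; simp at hc)
      have : (1:ℚ) ≤ (Multiset.card t : ℚ) := by exact_mod_cast hcard
      intro h; rw [h] at h1; nlinarith
    tauto

theorem stmt6 :
    let A : Set ℚ := {q | ∃ p : ℕ, p.Prime ∧ q = ((p : ℚ) - 1) / p}
    let P := AddSubmonoid.closure A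
    PM.Atomic P ∧ {a : ℚ | PM.IsAtom P a} = A ∧
      (∃ q : ℚ, 0 < q ∧ ∀ x ∈ P, x ≠ 0 → q ≤ x) ∧
      ∀ k : ℕ, (PM.U P k).Finite := by
  intro A P
  have hatoms : {a : ℚ | PM.IsAtom P a} = A := by
    ext a
    exact ⟨fun h => PMaux.mem_of_isAtom h, fun h => PMaux.isAtom_of_mem h⟩
  refine ⟨?_, hatoms, ⟨1/2, by norm_num, fun x hx hx0 => PMaux.half_le hx hx0⟩, ?_⟩
  · unfold PM.Atomic
    rw [hatoms]
  · intro k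
    apply Set.Finite.subset (Set.finite_Iic (2 * k))
    rintro l ⟨x, hxP, ⟨z1, ⟨hz1A, hz1s⟩, hz1c⟩, ⟨z2, ⟨hz2A, hz2s⟩, hz2c⟩⟩
    have h1 : ∀ y ∈ z1, y ∈ PMaux.Aset := fun y hy => PMaux.mem_of_isAtom (hz1A y hy)
    have h2 : ∀ y ∈ z2, y ∈ PMaux.Aset := fun y hy => PMaux.mem_of_isAtom (hz2A y hy)
    have hub := (PMaux.sum_bounds h1).2
    have hlb := (PMaux.sum_bounds h2).1
    rw [hz1s, hz1c] at hub
    rw [hz2s, hz2c] at hlb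
    have : (l:ℚ) ≤ 2 * k := by linarith
    exact_mod_cast this
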